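/- Suppose f: [0,∞) → (0,1] is differentiable with f(0) = 1, f'(0) = -μ for some μ > 0, and for every p ∈ (0,1) the function ψ_p(t) := f((1-p)t)·(1 - p + p·f(t)) is independent of p, i.e. ψ_p(t) = ψ_{p'}(t) for all p, p' ∈ (0,1) and t ≥ 0. Then f(t) = 1/(1 + μt) for all t ≥ 0. -/

import Mathlib

theorem stmt_17 (μ : ℝ) (hμ : 0 < μ)
    (f : ℝ → ℝ) (hdiff : Differentiable ℝ f)
    (hrange : ∀ t : ℝ, 0 ≤ t → f t ∈ Set.Ioc (0:ℝ) 1)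
    (h0 : f 0 = 1) (hderiv : deriv f 0 = -μ)
    (hindep : ∀ p p' : ℝ, p ∈ Set.Ioo (0:ℝ) 1 → p' ∈ Set.Ioo (0:ℝ) 1 → ∀ t : ℝ, 0 ≤ t →
      f ((1 - p) * t) * (1 - p + p * f t) = f ((1 - p') * t) * (1 - p' + p' * f t)) :
    ∀ t : ℝ, 0 ≤ t → f t = 1 / (1 + μ * t) := by
  have hcont : Continuous f := hdiff.continuous
  -- Step 1: limit p → 1 of the invariance equation
  have key : ∀ t : ℝ, 0 ≤ t → ∀ p ∈ Set.Ioo (0:ℝ) 1,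
      f ((1 - p) * t) * (1 - p + p * f t) = f t := by
    intro t ht p hp
    set h : ℝ → ℝ := fun q => f ((1 - q) * t) * (1 - q + q * f t) with hh
    have hc : Continuous h := by
      apply Continuous.mul
      · exact hcont.comp (by continuity)
      · continuity
    have hhalf : (1/2 : ℝ) ∈ Set.Ioo (0:ℝ) 1 := by norm_num
    have hconst : ∀ q ∈ Set.Ioo (0:ℝ) 1, h q = h (1/2) := fun q hq =>
      hindep q (1/2) hq hhalf t ht
    have hne : (nhdsWithin (1:ℝ) (Set.Ioo (0:ℝ) 1)).NeBot := by
      rw [← mem_closure_iff_nhdsWithin_neBot, closure_Ioo (by norm_num : (0:ℝ) ≠ 1)]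
      exact ⟨by norm_num, le_refl 1⟩
    have h1 : Filter.Tendsto h (nhdsWithin 1 (Set.Ioo (0:ℝ) 1)) (nhds (h 1)) :=
      (hc.tendsto 1).mono_left nhdsWithin_le_nhds
    have h2 : Filter.Tendsto h (nhdsWithin 1 (Set.Ioo (0:ℝ) 1)) (nhds (h (1/2))) := by
      refine Filter.Tendsto.congr' ?_ tendsto_const_nhds
      filter_upwards [eventually_mem_nhdsWithin] with q hq
      exact (hconst q hq).symm
    have heq : h 1 = h (1/2) := tendsto_nhds_unique h1 h2
    have h1v : h 1 = f t := by simp [hh, h0]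
    show h p = f t
    rw [hconst p hp, ← heq, h1v]
  -- Step 2: the functional equation in (s, t)
  have eq2 : ∀ t : ℝ, 0 < t → ∀ s : ℝ, 0 < s → s < t →
      s * f s * (1 - f t) = t * f t * (1 - f s) := by
    intro t ht s hs hst
    have hp : (1 - s/t) ∈ Set.Ioo (0:ℝ) 1 := by
      constructor
      · have : s/t < 1 := (div_lt_one ht).2 hst
        linarith
      · have : 0 < s/t := div_pos hs ht
        linarith
    have := key t ht.le (1 - s/t) hp
    have hst' : (1 - (1 - s/t)) * t = s := by field_simp; ring
    rw [hst'] at this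
    have ht' : t ≠ 0 := ht.ne'
    field_simp at this
    nlinarith [this]
  -- Step 3: limit s → 0⁺
  have hd : HasDerivAt f (-μ) 0 := hderiv ▸ (hdiff 0).hasDerivAt
  have hslope : Filter.Tendsto (fun s => (1 - f s) / s) (nhdsWithin 0 (Set.Ioi (0:ℝ)))
      (nhds μ) := by
    have h1 := hasDerivAt_iff_tendsto_slope.1 hd
    have h2 : Filter.Tendsto (slope f 0) (nhdsWithin 0 (Set.Ioi (0:ℝ))) (nhds (-μ)) :=
      h1.mono_left (nhdsWithin_mono 0 fun x hx => ne_of_gt hx)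
    have h3 := h2.neg
    rw [neg_neg] at h3
    refine h3.congr' ?_
    filter_upwards [eventually_mem_nhdsWithin] with s hs
    have hs0 : (s:ℝ) ≠ 0 := ne_of_gt hs
    have hsl : slope f 0 s = (f s - 1) / s := by simp [slope, h0]; ring
    show -(slope f 0 s) = (1 - f s) / s
    rw [hsl]; ring
  intro t ht
  rcases ht.eq_or_lt with rfl | htpos
  · simp [h0]
  · have hne0 : (nhdsWithin (0:ℝ) (Set.Ioo (0:ℝ) t)).NeBot := by
      rw [← mem_closure_iff_nhdsWithin_neBot, closure_Ioo htpos.ne]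
      exact ⟨le_refl 0, htpos.le⟩
    have hF : Filter.Tendsto (fun s => f s * (1 - f t)) (nhdsWithin 0 (Set.Ioo (0:ℝ) t))
        (nhds (1 * (1 - f t))) := by
      have : Filter.Tendsto f (nhdsWithin 0 (Set.Ioo (0:ℝ) t)) (nhds 1) := by
        have := (hcont.tendsto 0).mono_left (nhdsWithin_le_nhds (s := Set.Ioo (0:ℝ) t))
        rwa [h0] at this
      exact this.mul tendsto_const_nhds
    have hG : Filter.Tendsto (fun s => t * f t * ((1 - f s) / s))
        (nhdsWithin 0 (Set.Ioo (0:ℝ) t)) (nhds (t * f t * μ)) := by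
      exact tendsto_const_nhds.mul
        (hslope.mono_left (nhdsWithin_mono 0 fun x hx => hx.1))
    have hFG : Filter.Tendsto (fun s => f s * (1 - f t))
        (nhdsWithin 0 (Set.Ioo (0:ℝ) t)) (nhds (t * f t * μ)) := by
      refine hG.congr' ?_
      filter_upwards [eventually_mem_nhdsWithin] with s hs
      have h2 := eq2 t htpos s hs.1 hs.2
      have hs0 : (s:ℝ) ≠ 0 := ne_of_gt hs.1
      field_simp
      linarith [h2]
    have hfin : 1 * (1 - f t) = t * f t * μ := tendsto_nhds_unique hF hFG
    have hft : 0 < f t := (hrange t ht).1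
    have hpos : 0 < 1 + μ * t := by positivity
    field_simp
    nlinarith [hfin]
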